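/- Centered p-th moment bound for the conditional tail distribution: let X have continuous strictly increasing CDF with E[|X−μ|^p] ≤ V and E[|X|^p] ≤ B for p ∈ (1,2], where μ = E[X]. Let X̃ be distributed as the conditional law of X given X ≥ v_α(X). Then E[|X̃ − c_α(X)|^p] ≤ 2^{p−1} V/β + 2^p B/β, where β = 1−α. -/

import Mathlib

open MeasureTheory

lemma aux_rpow_sub (p : ℝ) (hp : 1 ≤ p) (a b : ℝ) :
    |a - b| ^ p ≤ 2 ^ (p - 1) * (|a| ^ p + |b| ^ p) := by
  have h := NNReal.rpow_add_le_mul_rpow_add_rpow ‖a‖₊ ‖b‖₊ hp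
  have h2 : |a - b| ^ p ≤ (|a| + |b|) ^ p :=
    Real.rpow_le_rpow (abs_nonneg _) (abs_sub a b) (by linarith)
  refine h2.trans ?_
  have := (NNReal.coe_le_coe).2 h
  push_cast at this
  simpa [Real.norm_eq_abs] using this

lemma aux_convexOn (p : ℝ) (hp : 1 ≤ p) :
    ConvexOn ℝ Set.univ (fun x : ℝ => |x| ^ p) := by
  have h1 : ConvexOn ℝ (Set.Ici 0) (fun y : ℝ => y ^ p) := convexOn_rpow hp
  refine ⟨convex_univ, fun x _ y _ a b ha hb hab => ?_⟩
  have habs : |a • x + b • y| ≤ a * |x| + b * |y| := by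
    calc |a • x + b • y| ≤ |a • x| + |b • y| := abs_add_le _ _
    _ = a * |x| + b * |y| := by
        simp [smul_eq_mul, abs_mul, abs_of_nonneg ha, abs_of_nonneg hb]
  calc |a • x + b • y| ^ p ≤ (a * |x| + b * |y|) ^ p :=
        Real.rpow_le_rpow (abs_nonneg _) habs (by linarith)
    _ ≤ a * |x| ^ p + b * |y| ^ p := by
        have := h1.2 (Set.mem_Ici.2 (abs_nonneg x)) (Set.mem_Ici.2 (abs_nonneg y)) ha hb hab
        simpa [smul_eq_mul] using this

/-- Centered p-th moment bound for the conditional tail distribution: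
let `X` have continuous strictly increasing CDF with `E[|X - m|^p] ≤ V` and
`E[|X|^p] ≤ B` for `p ∈ (1,2]`, where `m = E[X]`. Let `X̃` have the conditional law of
`X` given `X ≥ v_α(X)` (so `E[g(X̃)] = (1/β) E[g(X) 1{X ≥ v}]`). Then with
`c = c_α(X) = (1/β) E[X · 1{X ≥ v}]`,
`E[|X̃ - c|^p] = (1/β) E[|X - c|^p · 1{X ≥ v}] ≤ 2^(p-1) V/β + 2^p B/β`, `β = 1 - α`. -/
theorem conditional_tail_centered_moment_bound
    {Ω : Type*} [MeasurableSpace Ω] (μ : Measure Ω) [IsProbabilityMeasure μ]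
    (X : Ω → ℝ) (hXmeas : Measurable X) (hXint : Integrable X μ)
    (p B V α β v m c : ℝ) (hp : p ∈ Set.Ioc (1 : ℝ) 2)
    (hα : α ∈ Set.Ioo (0 : ℝ) 1) (hβ : β = 1 - α)
    (hm : m = ∫ ω, X ω ∂μ)
    (hmomB_int : Integrable (fun ω => |X ω| ^ p) μ)
    (hmomB : ∫ ω, |X ω| ^ p ∂μ ≤ B)
    (hmomV_int : Integrable (fun ω => |X ω - m| ^ p) μ)
    (hmomV : ∫ ω, |X ω - m| ^ p ∂μ ≤ V)
    (hv : μ {ω | v ≤ X ω} = ENNReal.ofReal β)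
    (hc : c = (1 / β) * ∫ ω in {ω | v ≤ X ω}, X ω ∂μ) :
    (1 / β) * (∫ ω in {ω | v ≤ X ω}, |X ω - c| ^ p ∂μ)
      ≤ 2 ^ (p - 1) * V / β + 2 ^ p * B / β := by
  obtain ⟨hp1, hp2⟩ := hp
  have hp1' : (1:ℝ) ≤ p := hp1.le
  have hβ0 : 0 < β := by rw [hβ]; linarith [hα.2]
  set S : Set Ω := {ω | v ≤ X ω} with hS
  -- basic facts
  have hofβ0 : (ENNReal.ofReal β) ≠ 0 := by
    simp [ENNReal.ofReal_eq_zero, not_le, hβ0]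
  have hofβtop : (ENNReal.ofReal β) ≠ ⊤ := ENNReal.ofReal_ne_top
  set ν : Measure Ω := (ENNReal.ofReal β)⁻¹ • μ.restrict S with hν
  have hνprob : IsProbabilityMeasure ν := by
    constructor
    rw [hν]
    simp only [Measure.smul_apply, Measure.restrict_apply MeasurableSet.univ,
      Set.univ_inter, hv, smul_eq_mul]
    exact ENNReal.inv_mul_cancel hofβ0 hofβtop
  have hνint : ∀ f : Ω → ℝ, ∫ x, f x ∂ν = β⁻¹ * ∫ x in S, f x ∂μ := by
    intro f
    rw [hν, integral_smul_measure]
    simp [ENNReal.toReal_inv, ENNReal.toReal_ofReal hβ0.le, smul_eq_mul]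
  -- c = mean of X under ν
  have hcν : c = ∫ x, X x ∂ν := by rw [hνint, hc, one_div]
  -- integrability under ν
  have hXν : Integrable X ν := (hXint.restrict).smul_measure (ENNReal.inv_ne_top.2 hofβ0)
  have hXpν : Integrable (fun x => |X x| ^ p) ν :=
    (hmomB_int.restrict).smul_measure (ENNReal.inv_ne_top.2 hofβ0)
  -- Jensen
  have hB0 : (0:ℝ) ≤ B := le_trans (integral_nonneg (fun ω => Real.rpow_nonneg (abs_nonneg _) p)) hmomB
  have hSintB : ∫ x in S, |X x| ^ p ∂μ ≤ B := by
    refine le_trans (setIntegral_le_integral hmomB_int ?_) hmomB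
    exact Filter.Eventually.of_forall fun ω => Real.rpow_nonneg (abs_nonneg _) p
  have hcont : Continuous (fun x : ℝ => |x| ^ p) :=
    continuous_abs.rpow_const (fun x => Or.inr (by linarith))
  have hJensen : |c| ^ p ≤ β⁻¹ * B := by
    have := (aux_convexOn p hp1').map_integral_le (μ := ν) hcont.continuousOn
      isClosed_univ (Filter.Eventually.of_forall fun x => Set.mem_univ _) hXν
      (by exact hXpν)
    rw [← hcν] at this
    refine this.trans ?_
    rw [hνint]
    exact mul_le_mul_of_nonneg_left hSintB (by positivity)
  -- pointwise bound and integrability of |X - c|^p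
  have hptwise : ∀ ω, |X ω - c| ^ p ≤ 2 ^ (p - 1) * (|X ω| ^ p + |c| ^ p) :=
    fun ω => aux_rpow_sub p hp1' (X ω) c
  have hGint : Integrable (fun ω => 2 ^ (p - 1) * (|X ω| ^ p + |c| ^ p)) μ :=
    ((hmomB_int.add (integrable_const _)).const_mul _)
  have hcont : Continuous (fun x : ℝ => |x| ^ p) :=
    continuous_abs.rpow_const (fun x => Or.inr (by linarith))
  have hFmeas : AEStronglyMeasurable (fun ω => |X ω - c| ^ p) μ :=
    (hcont.measurable.comp (hXmeas.sub measurable_const)).aestronglyMeasurable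
  have hFint : Integrable (fun ω => |X ω - c| ^ p) μ := by
    refine hGint.mono hFmeas (Filter.Eventually.of_forall fun ω => ?_)
    have h1 : (0:ℝ) ≤ |X ω - c| ^ p := Real.rpow_nonneg (abs_nonneg _) p
    have h2 : (0:ℝ) ≤ 2 ^ (p - 1) * (|X ω| ^ p + |c| ^ p) := by
      have := Real.rpow_nonneg (abs_nonneg (X ω)) p
      have := Real.rpow_nonneg (abs_nonneg c) p
      positivity
    rw [Real.norm_eq_abs, Real.norm_eq_abs, abs_of_nonneg h1, abs_of_nonneg h2]
    exact hptwise ω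
  have hSmeas : MeasurableSet S := measurableSet_le measurable_const hXmeas
  -- main integral estimate
  have hmain : ∫ ω in S, |X ω - c| ^ p ∂μ ≤ 2 ^ p * B := by
    have step1 : ∫ ω in S, |X ω - c| ^ p ∂μ
        ≤ ∫ ω in S, 2 ^ (p - 1) * (|X ω| ^ p + |c| ^ p) ∂μ := by
      refine setIntegral_mono_on hFint.restrict hGint.restrict hSmeas fun ω _ => hptwise ω
    have step2 : ∫ ω in S, 2 ^ (p - 1) * (|X ω| ^ p + |c| ^ p) ∂μ
        = 2 ^ (p - 1) * ((∫ ω in S, |X ω| ^ p ∂μ) + β * |c| ^ p) := by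
      rw [integral_const_mul, integral_add hmomB_int.restrict (integrable_const _),
        setIntegral_const, measureReal_def, hv, ENNReal.toReal_ofReal hβ0.le, smul_eq_mul]
    have hβc : β * |c| ^ p ≤ B := by
      have := mul_le_mul_of_nonneg_left hJensen hβ0.le
      rwa [← mul_assoc, mul_inv_cancel₀ hβ0.ne', one_mul] at this
    have step3 : 2 ^ (p - 1) * ((∫ ω in S, |X ω| ^ p ∂μ) + β * |c| ^ p)
        ≤ 2 ^ (p - 1) * (B + B) := by
      refine mul_le_mul_of_nonneg_left (add_le_add hSintB hβc) ?_
      positivity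
    have h2p : (2:ℝ) ^ (p - 1) * (B + B) = 2 ^ p * B := by
      have h2 : (2:ℝ) ^ p = 2 ^ (p - 1) * 2 := by
        rw [← Real.rpow_add_one (by norm_num : (2:ℝ) ≠ 0) (p - 1), sub_add_cancel]
      rw [h2]; ring
    calc ∫ ω in S, |X ω - c| ^ p ∂μ ≤ _ := step1
      _ = _ := step2
      _ ≤ 2 ^ (p - 1) * (B + B) := step3
      _ = 2 ^ p * B := h2p
  -- conclude
  have hV0 : (0:ℝ) ≤ V :=
    le_trans (integral_nonneg (fun ω => Real.rpow_nonneg (abs_nonneg _) p)) hmomV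
  have hfinal : (1 / β) * (∫ ω in S, |X ω - c| ^ p ∂μ) ≤ 2 ^ p * B / β :=
    calc (1 / β) * (∫ ω in S, |X ω - c| ^ p ∂μ)
        ≤ (1 / β) * (2 ^ p * B) := mul_le_mul_of_nonneg_left hmain (by positivity)
      _ = 2 ^ p * B / β := by ring
  refine hfinal.trans ?_
  have : (0:ℝ) ≤ 2 ^ (p - 1) * V / β := by positivity
  linarith
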